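/- For any odd prime p, there exists a constant C such that |L_p(n)| ≤ C · log n for all n ≥ 2; in fact max_{n < p^i} |L_p(n)| = i · max_{n < p} |L_p(n)|. -/

import Mathlib

open Finset

private lemma period_sum19 (p : ℕ) [Fact p.Prime] (hodd : p ≠ 2) (a : ℕ) :
    ∑ i ∈ range p, legendreSym p (a + i) = 0 := by
  have hchar : ringChar (ZMod p) ≠ 2 := by
    rw [ZMod.ringChar_zmod_n]; exact hodd
  have h0 : ∑ x : ZMod p, quadraticChar (ZMod p) x = 0 := quadraticChar_sum_zero hchar
  calc ∑ i ∈ range p, legendreSym p (a + i)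
      = ∑ x : ZMod p, quadraticChar (ZMod p) ((a : ZMod p) + x) := by
        refine Finset.sum_nbij' (fun i => ((i : ZMod p))) (fun x => x.val) ?_ ?_ ?_ ?_ ?_
        · intro i _; exact Finset.mem_univ _
        · intro x _; simpa [Finset.mem_range] using ZMod.val_lt x
        · intro i hi
          simp only [Finset.mem_range] at hi
          exact ZMod.val_cast_of_lt hi
        · intro x _; exact ZMod.natCast_rightInverse x
        · intro i _
          simp only [legendreSym]
          push_cast
          ring_nf
    _ = 0 := by
        rw [← Equiv.sum_comp (Equiv.addLeft (a : ZMod p))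
          (fun x => quadraticChar (ZMod p) x)] at h0
        exact h0

private lemma S_period19 (p : ℕ) [Fact p.Prime] (hodd : p ≠ 2) (n : ℕ) :
    ∑ m ∈ Icc 1 (n + p), (legendreSym p m) = ∑ m ∈ Icc 1 n, (legendreSym p m) := by
  have h1 : ∀ k : ℕ, Icc 1 k = Ioc 0 k := fun k => rfl
  rw [h1, h1, ← Finset.sum_Ioc_consecutive _ (Nat.zero_le n) (Nat.le_add_right n p)]
  rw [show Ioc n (n + p) = Ico (n + 1) (n + p + 1) by ext x; simp,
    Finset.sum_Ico_eq_sum_range]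
  have h3 : n + p + 1 - (n + 1) = p := by omega
  rw [h3]
  have h4 : ∑ k ∈ range p, legendreSym p ((n + 1 + k : ℕ) : ℤ) = 0 := by
    have := period_sum19 p hodd (n + 1)
    push_cast at this ⊢
    exact this
  rw [h4, add_zero]

private lemma S_mod19 (p : ℕ) [Fact p.Prime] (hodd : p ≠ 2) (n : ℕ) :
    ∑ m ∈ Icc 1 n, (legendreSym p m) = ∑ m ∈ Icc 1 (n % p), (legendreSym p m) := by
  induction n using Nat.strong_induction_on with
  | _ n ih =>
    rcases lt_or_ge n p with h | h
    · rw [Nat.mod_eq_of_lt h]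
    · have hp : 0 < p := (Fact.out : p.Prime).pos
      have h1 : n - p + p = n := by omega
      have h2 : (n - p) % p = n % p := by
        conv_rhs => rw [← h1]
        rw [Nat.add_mod_right]
      calc ∑ m ∈ Icc 1 n, (legendreSym p m)
          = ∑ m ∈ Icc 1 (n - p + p), (legendreSym p m) := by rw [h1]
        _ = ∑ m ∈ Icc 1 (n - p), (legendreSym p m) := S_period19 p hodd _
        _ = ∑ m ∈ Icc 1 ((n - p) % p), (legendreSym p m) := ih (n - p) (by omega)
        _ = ∑ m ∈ Icc 1 (n % p), (legendreSym p m) := by rw [h2]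

private lemma f_eq_chi19 (p : ℕ) [Fact p.Prime]
    (f : ℕ → ℤ) (hf1 : f 1 = 1) (hfmul : ∀ m n, f (m * n) = f m * f n)
    (hfq : ∀ q : ℕ, q.Prime → q ≠ p → f q = legendreSym p q) :
    ∀ m : ℕ, ¬ p ∣ m → f m = legendreSym p m := by
  intro m
  induction m using Nat.strong_induction_on with
  | _ m ih =>
    intro hpm
    rcases Nat.eq_zero_or_pos m with rfl | hm0
    · exact absurd (dvd_zero p) hpm
    rcases eq_or_ne m 1 with rfl | hm1
    · simp [hf1]
    · have hq : m.minFac.Prime := Nat.minFac_prime hm1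
      have hqd : m.minFac ∣ m := Nat.minFac_dvd m
      have hqp : m.minFac ≠ p := fun h => hpm (h ▸ hqd)
      obtain ⟨t, ht⟩ := hqd
      have ht1 : t < m := by
        rcases Nat.eq_zero_or_pos t with rfl | htp
        · omega
        · calc t < m.minFac * t := by
                have := hq.two_le; nlinarith
            _ = m := ht.symm
      have hpt : ¬ p ∣ t := fun h => hpm (ht ▸ Dvd.dvd.mul_left h _)
      rw [ht, hfmul, hfq _ hq hqp, ih t ht1 hpt]
      push_cast
      rw [← legendreSym.mul]

private lemma L_rec19 (p : ℕ) [Fact p.Prime]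
    (f : ℕ → ℤ) (hfmul : ∀ m n, f (m * n) = f m * f n) (hfp : f p = 1)
    (hfeq : ∀ m : ℕ, ¬ p ∣ m → f m = legendreSym p m) (n : ℕ) :
    ∑ m ∈ Icc 1 n, f m
      = (∑ m ∈ Icc 1 n, legendreSym p m) + ∑ m ∈ Icc 1 (n / p), f m := by
  have hp : 0 < p := (Fact.out : p.Prime).pos
  rw [← Finset.sum_filter_add_sum_filter_not (Icc 1 n) (fun m => p ∣ m) f]
  have h1 : ∑ m ∈ (Icc 1 n).filter (fun m => ¬ p ∣ m), f m
      = ∑ m ∈ Icc 1 n, legendreSym p m := by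
    rw [Finset.sum_filter]
    refine Finset.sum_congr rfl fun m hm => ?_
    by_cases h : p ∣ m
    · rw [if_neg (by simpa using h), eq_comm, legendreSym.eq_zero_iff]
      exact_mod_cast (ZMod.natCast_eq_zero_iff m p).mpr h
    · rw [if_pos (by simpa using h)]
      exact hfeq m h
  have h2 : ∑ m ∈ (Icc 1 n).filter (fun m => p ∣ m), f m
      = ∑ j ∈ Icc 1 (n / p), f j := by
    refine Finset.sum_nbij' (fun m => m / p) (fun j => p * j) ?_ ?_ ?_ ?_ ?_
    · intro m hm
      simp only [Finset.mem_filter, Finset.mem_Icc] at hm ⊢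
      obtain ⟨⟨h1m, h2m⟩, hdp⟩ := hm
      constructor
      · exact (Nat.one_le_div_iff hp).mpr (Nat.le_of_dvd (by omega) hdp)
      · exact Nat.div_le_div_right h2m
    · intro j hj
      simp only [Finset.mem_filter, Finset.mem_Icc] at hj ⊢
      refine ⟨⟨by nlinarith [hj.1], ?_⟩, Dvd.intro _ rfl⟩
      rw [mul_comm]
      exact (Nat.le_div_iff_mul_le hp).mp hj.2
    · intro m hm
      simp only [Finset.mem_filter] at hm
      exact Nat.mul_div_cancel' hm.2
    · intro j hj
      exact Nat.mul_div_cancel_left j hp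
    · intro m hm
      simp only [Finset.mem_filter] at hm
      conv_lhs => rw [← Nat.mul_div_cancel' hm.2]
      rw [hfmul, hfp, one_mul]
  rw [h1, h2, add_comm]

private lemma L_sum19 (p : ℕ) [Fact p.Prime]
    (f : ℕ → ℤ) (hfmul : ∀ m n, f (m * n) = f m * f n) (hfp : f p = 1)
    (hfeq : ∀ m : ℕ, ¬ p ∣ m → f m = legendreSym p m) :
    ∀ i n : ℕ, n < p ^ i →
      ∑ m ∈ Icc 1 n, f m
        = ∑ k ∈ range i, ∑ m ∈ Icc 1 (n / p ^ k), legendreSym p m := by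
  have hp : 0 < p := (Fact.out : p.Prime).pos
  intro i
  induction i with
  | zero =>
    intro n hn
    have : n = 0 := by simpa using hn
    subst this
    simp
  | succ i ih =>
    intro n hn
    rw [L_rec19 p f hfmul hfp hfeq n, Finset.sum_range_succ']
    have hdiv : n / p < p ^ i := by
      rw [Nat.div_lt_iff_lt_mul hp]
      calc n < p ^ (i + 1) := hn
        _ = p ^ i * p := pow_succ p i
    rw [ih (n / p) hdiv]
    simp only [pow_zero, Nat.div_one]
    rw [add_comm]
    congr 1
    refine Finset.sum_congr rfl fun k _ => ?_
    congr 1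
    rw [Nat.div_div_eq_div_mul]
    congr 1
    rw [pow_succ']

/-- `|L_p(n)| ≪ log n`; in fact
`max_{n < p^i} |L_p(n)| = i · max_{n < p} |L_p(n)|`. -/
theorem stmt_19 (p : ℕ) [Fact p.Prime] (hodd : p ≠ 2)
    (f : ℕ → ℤ) (hf1 : f 1 = 1) (hfmul : ∀ m n, f (m * n) = f m * f n)
    (hfp : f p = 1) (hfq : ∀ q : ℕ, q.Prime → q ≠ p → f q = legendreSym p q) :
    (∃ C : ℝ, ∀ n : ℕ, 2 ≤ n →
        |(∑ m ∈ Finset.Icc 1 n, f m : ℝ)| ≤ C * Real.log n) ∧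
      ∀ i : ℕ,
        ((Finset.range (p ^ i)).sup fun n => (∑ m ∈ Finset.Icc 1 n, f m).natAbs)
          = i * ((Finset.range p).sup fun n => (∑ m ∈ Finset.Icc 1 n, f m).natAbs) := by
  have hp : 0 < p := (Fact.out : p.Prime).pos
  have hp1 : 1 < p := (Fact.out : p.Prime).one_lt
  have hfeq := f_eq_chi19 p f hf1 hfmul hfq
  set S : ℕ → ℤ := fun n => ∑ m ∈ Icc 1 n, legendreSym p m with hS
  set L : ℕ → ℤ := fun n => ∑ m ∈ Icc 1 n, f m with hL
  set M : ℕ := (Finset.range p).sup fun n => (S n).natAbs with hM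
  -- L = S on range p
  have hLS : ∀ n, n < p → L n = S n := by
    intro n hn
    have := L_sum19 p f hfmul hfp hfeq 1 n (by simpa using hn)
    simpa using this
  have hsupM : ((Finset.range p).sup fun n => (L n).natAbs) = M := by
    refine Finset.sup_congr rfl fun n hn => ?_
    rw [hLS n (Finset.mem_range.mp hn)]
  -- each |S m| ≤ M
  have hSM : ∀ m : ℕ, (S m).natAbs ≤ M := by
    intro m
    have : S m = S (m % p) := S_mod19 p hodd m
    rw [this, hM]
    exact Finset.le_sup (f := fun n : ℕ => (S n).natAbs)
      (Finset.mem_range.mpr (Nat.mod_lt _ hp))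
  -- upper bound
  have hupper : ∀ i n : ℕ, n < p ^ i → (L n).natAbs ≤ i * M := by
    intro i n hn
    have hLn : L n = ∑ k ∈ range i, S (n / p ^ k) := L_sum19 p f hfmul hfp hfeq i n hn
    have : ((L n).natAbs : ℤ) ≤ ((i * M : ℕ) : ℤ) := by
      rw [Int.natCast_natAbs, hLn]
      calc |∑ k ∈ range i, S (n / p ^ k)|
          ≤ ∑ k ∈ range i, |S (n / p ^ k)| := Finset.abs_sum_le_sum_abs _ _
        _ ≤ ∑ k ∈ range i, (M : ℤ) := by
            refine Finset.sum_le_sum fun k _ => ?_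
            rw [Int.abs_eq_natAbs]
            exact_mod_cast hSM (n / p ^ k)
        _ = ((i * M : ℕ) : ℤ) := by push_cast; rw [Finset.sum_const, Finset.card_range]; ring
    exact_mod_cast this
  -- pick r achieving M
  have hex : ∃ r ∈ Finset.range p,
      ((Finset.range p).sup fun n => (S n).natAbs) = (S r).natAbs :=
    Finset.exists_mem_eq_sup (Finset.range p)
      (Finset.nonempty_range_iff.mpr (by omega)) (fun n : ℕ => (S n).natAbs)
  obtain ⟨r, hr, hrM⟩ := hex
  rw [Finset.mem_range] at hr
  -- witness sequence
  let g : ℕ → ℕ := fun i => Nat.rec 0 (fun _ gi => r + p * gi) i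
  have hg0 : g 0 = 0 := rfl
  have hgs : ∀ i, g (i + 1) = r + p * g i := fun i => rfl
  have hglt : ∀ i, g i < p ^ i := by
    intro i
    induction i with
    | zero => simp [hg0]
    | succ i ih =>
      rw [hgs, pow_succ]
      nlinarith
  have hgL : ∀ i, L (g i) = i * S r := by
    intro i
    induction i with
    | zero => simp [hg0, hL]
    | succ i ih =>
      have hd : (r + p * g i) / p = g i := by
        rw [Nat.add_mul_div_left _ _ hp, Nat.div_eq_of_lt hr, zero_add]
      have hm : (r + p * g i) % p = r := by
        rw [Nat.add_mul_mod_self_left, Nat.mod_eq_of_lt hr]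
      have hrec : L (r + p * g i) = S (r + p * g i) + L ((r + p * g i) / p) :=
        L_rec19 p f hfmul hfp hfeq _
      have hS1 : S (r + p * g i) = S r := by
        have h5 : S (r + p * g i) = S ((r + p * g i) % p) := S_mod19 p hodd _
        rw [hm] at h5
        exact h5
      rw [hgs, hrec, hS1, hd, ih]
      push_cast
      ring
  have hlower : ∀ i, i * M ≤ (Finset.range (p ^ i)).sup fun n => (L n).natAbs := by
    intro i
    have hmem : g i ∈ Finset.range (p ^ i) := Finset.mem_range.mpr (hglt i)
    have hMr : M = (S r).natAbs := by rw [hM, hrM]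
    have heq : (L (g i)).natAbs = i * M := by
      rw [hgL i, Int.natAbs_mul, Int.natAbs_natCast, hMr]
    calc i * M = (L (g i)).natAbs := heq.symm
      _ ≤ (Finset.range (p ^ i)).sup fun n => (L n).natAbs :=
        Finset.le_sup (f := fun n => (L n).natAbs) hmem
  have hmain : ∀ i : ℕ,
      ((Finset.range (p ^ i)).sup fun n => (L n).natAbs) = i * M := by
    intro i
    refine le_antisymm ?_ (hlower i)
    exact Finset.sup_le fun n hn => hupper i n (Finset.mem_range.mp hn)
  constructor
  · -- analytic bound
    refine ⟨(M : ℝ) * (1 / Real.log p + 1 / Real.log 2), fun n hn => ?_⟩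
    have hn0 : 0 < n := by omega
    have hi : n < p ^ (Nat.log p n + 1) := Nat.lt_pow_succ_log_self hp1 n
    have hub : (L n).natAbs ≤ (Nat.log p n + 1) * M := hupper _ n hi
    have hlogp : 0 < Real.log p := Real.log_pos (by exact_mod_cast hp1)
    have hlog2 : 0 < Real.log 2 := Real.log_pos (by norm_num)
    have hlogn2 : Real.log 2 ≤ Real.log n := by
      apply Real.log_le_log (by norm_num)
      exact_mod_cast hn
    have hlogn : 0 < Real.log n := lt_of_lt_of_le hlog2 hlogn2
    have habs : |(∑ m ∈ Finset.Icc 1 n, f m : ℝ)| = ((L n).natAbs : ℝ) := by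
      have hcast : (∑ m ∈ Finset.Icc 1 n, (f m : ℝ)) = ((L n : ℤ) : ℝ) := by
        rw [hL]; push_cast; rfl
      rw [hcast, Nat.cast_natAbs, Int.cast_abs]
    rw [habs]
    have hkey : ((Nat.log p n : ℝ)) * Real.log p ≤ Real.log n := by
      rw [← Real.log_pow]
      apply Real.log_le_log (by positivity)
      exact_mod_cast Nat.pow_log_le_self p (by omega)
    calc ((L n).natAbs : ℝ) ≤ ((Nat.log p n + 1) * M : ℕ) := by exact_mod_cast hub
      _ = (M : ℝ) * ((Nat.log p n : ℝ) + 1) := by push_cast; ring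
      _ ≤ (M : ℝ) * (Real.log n / Real.log p + Real.log n / Real.log 2) := by
          apply mul_le_mul_of_nonneg_left _ (by positivity)
          have h1 : (Nat.log p n : ℝ) ≤ Real.log n / Real.log p := by
            rw [le_div_iff₀ hlogp]
            exact hkey
          have h2 : (1 : ℝ) ≤ Real.log n / Real.log 2 := by
            rw [le_div_iff₀ hlog2, one_mul]
            exact hlogn2
          linarith
      _ = (M : ℝ) * (1 / Real.log p + 1 / Real.log 2) * Real.log n := by ring
  · intro i
    calc ((Finset.range (p ^ i)).sup fun n => (L n).natAbs) = i * M := hmain i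
      _ = i * ((Finset.range p).sup fun n => (L n).natAbs) := by rw [hsupM]
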